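/- For every set E ⊂ ℝ², the two-dimensional Lebesgue outer measure of E is at least the upper integral over r ∈ (0, ∞) of the one-dimensional Hausdorff outer measure of E ∩ S_r, where S_r is the circle of radius r centered at the origin. -/

import Mathlib

open MeasureTheory Metric Set

open scoped Real ENNReal

private lemma lintegral_comp_polarCoord_symm' (f : ℝ × ℝ → ℝ≥0∞) :
    ∫⁻ p in polarCoord.target, ENNReal.ofReal p.1 * f (polarCoord.symm p) = ∫⁻ p, f p := by
  set B : ℝ × ℝ → ℝ × ℝ →L[ℝ] ℝ × ℝ := fun p =>
    LinearMap.toContinuousLinearMap (Matrix.toLin (Module.Basis.finTwoProd ℝ) (Module.Basis.finTwoProd ℝ)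
      !![Real.cos p.2, -p.1 * Real.sin p.2; Real.sin p.2, p.1 * Real.cos p.2])
  have A : ∀ p ∈ polarCoord.target, HasFDerivWithinAt polarCoord.symm (B p) polarCoord.target p :=
    fun p _ => (hasFDerivAt_polarCoord_symm p).hasFDerivWithinAt
  have B_det : ∀ p : ℝ × ℝ, (B p).det = p.1 := by
    intro p
    conv_rhs => rw [← one_mul p.1, ← Real.cos_sq_add_sin_sq p.2]
    simp only [B, neg_mul, LinearMap.det_toContinuousLinearMap, LinearMap.det_toLin,
      Matrix.det_fin_two_of, sub_neg_eq_add]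
    ring
  symm
  calc
    ∫⁻ p, f p = ∫⁻ p in polarCoord.source, f p := by
      rw [← setLIntegral_univ]
      exact (setLIntegral_congr polarCoord_source_ae_eq_univ.symm)
    _ = ∫⁻ p in polarCoord.symm '' polarCoord.target, f p := by
      rw [polarCoord.symm_image_target_eq_source]
    _ = ∫⁻ p in polarCoord.target, ENNReal.ofReal |(B p).det| * f (polarCoord.symm p) := by
      exact lintegral_image_eq_lintegral_abs_det_fderiv_mul volume
        polarCoord.open_target.measurableSet A polarCoord.symm.injOn f
    _ = ∫⁻ p in polarCoord.target, ENNReal.ofReal p.1 * f (polarCoord.symm p) := by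
      refine setLIntegral_congr_fun polarCoord.open_target.measurableSet
        (fun p hp => ?_)
      rw [B_det, abs_of_pos hp.1]

private lemma lintegral_comp_complex_polarCoord_symm (f : ℂ → ℝ≥0∞) :
    ∫⁻ p in polarCoord.target, ENNReal.ofReal p.1 * f (Complex.polarCoord.symm p) =
      ∫⁻ z, f z := by
  rw [← (Complex.volume_preserving_equiv_real_prod.symm).lintegral_comp_emb
      Complex.measurableEquivRealProd.symm.measurableEmbedding, ← lintegral_comp_polarCoord_symm']
  rfl

/-- The planar Lebesgue outer measure of `E` dominates the upper integral over `r ∈ (0,∞)`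
of the one-dimensional Hausdorff outer measure of the circular cross-sections `E ∩ S_r`. -/
theorem outer_measure_ge_upper_integral_circular_sections
    (E : Set (EuclideanSpace ℝ (Fin 2))) :
    (⨅ (g : ℝ → ENNReal) (_ : Measurable g)
        (_ : ∀ r ∈ Set.Ioi (0 : ℝ), (μH[1] : Measure (EuclideanSpace ℝ (Fin 2)))
          (E ∩ sphere 0 r) ≤ g r),
      ∫⁻ r in Set.Ioi (0 : ℝ), g r) ≤ volume E := by
  classical
  set G := toMeasurable volume E with hGdef
  have hGm : MeasurableSet G := measurableSet_toMeasurable _ _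
  have hEG : E ⊆ G := subset_toMeasurable _ _
  have hvol : volume G = volume E := measure_toMeasurable E
  set L : ℂ ≃ₗᵢ[ℝ] EuclideanSpace ℝ (Fin 2) := Complex.orthonormalBasisOneI.repr with hL
  set G' : Set ℂ := (⇑L) ⁻¹' G with hG'
  have hG'm : MeasurableSet G' := hGm.preimage L.continuous.measurable
  have hcm : Continuous fun p : ℝ × ℝ => circleMap 0 p.1 p.2 := by
    simp only [circleMap]
    fun_prop
  set S : Set (ℝ × ℝ) :=
    (Prod.snd ⁻¹' Icc (-π) π) ∩ ((fun p : ℝ × ℝ => circleMap 0 p.1 p.2) ⁻¹' G') with hS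
  have hSm : MeasurableSet S :=
    (measurable_snd measurableSet_Icc).inter (hcm.measurable hG'm)
  set g : ℝ → ℝ≥0∞ := fun r => ENNReal.ofReal r * volume (Prod.mk r ⁻¹' S) with hg
  have hgm : Measurable g :=
    ENNReal.measurable_ofReal.mul (measurable_measure_prodMk_left hSm)
  -- pointwise bound
  have hb : ∀ r ∈ Set.Ioi (0 : ℝ),
      (μH[1] : Measure (EuclideanSpace ℝ (Fin 2))) (E ∩ sphere 0 r) ≤ g r := by
    intro r hr
    have hr' : (0 : ℝ) < r := hr
    have hsub : E ∩ sphere 0 r ⊆ (fun θ => L (circleMap 0 r θ)) '' (Prod.mk r ⁻¹' S) := by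
      rintro x ⟨hxE, hxS⟩
      have hnorm : ‖x‖ = r := by simpa using mem_sphere_zero_iff_norm.1 hxS
      set z : ℂ := L.symm x with hz
      have habs : ‖z‖ = r := by
        rw [hz, L.symm.norm_map, hnorm]
      have hcz : circleMap 0 r z.arg = z := by
        rw [circleMap, zero_add, ← habs, Complex.norm_mul_exp_arg_mul_I]
      refine ⟨z.arg, ⟨?_, ?_⟩, ?_⟩
      · exact ⟨(Complex.neg_pi_lt_arg z).le, Complex.arg_le_pi z⟩
      · show circleMap 0 r z.arg ∈ G'
        rw [hcz, hG', Set.mem_preimage, hz, L.apply_symm_apply]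
        exact hEG hxE
      · show L (circleMap 0 r z.arg) = x
        rw [hcz, hz, L.apply_symm_apply]
    have hlip : LipschitzWith r.nnabs (fun θ => L (circleMap 0 r θ)) := by
      have := L.isometry.lipschitz.comp (lipschitzWith_circleMap 0 r); rw [one_mul] at this; exact this
    calc (μH[1] : Measure (EuclideanSpace ℝ (Fin 2))) (E ∩ sphere 0 r)
        ≤ μH[1] ((fun θ => L (circleMap 0 r θ)) '' (Prod.mk r ⁻¹' S)) := measure_mono hsub
      _ ≤ (r.nnabs : ℝ≥0∞) ^ (1 : ℝ) * μH[1] (Prod.mk r ⁻¹' S) :=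
          hlip.hausdorffMeasure_image_le zero_le_one _
      _ = g r := by
          rw [ENNReal.rpow_one, MeasureTheory.hausdorffMeasure_real]
          congr 1
          rw [ENNReal.ofReal]
          congr 1
          ext
          simp [abs_of_pos hr', le_of_lt hr']
  -- integral bound
  have hint : ∫⁻ r in Set.Ioi (0 : ℝ), g r ≤ volume E := by
    have key := lintegral_comp_complex_polarCoord_symm (G'.indicator 1)
    have hF : (fun p : ℝ × ℝ => ENNReal.ofReal p.1 * G'.indicator 1 (Complex.polarCoord.symm p))
        = fun p : ℝ × ℝ => ENNReal.ofReal p.1 * G'.indicator 1 (circleMap 0 p.1 p.2) := by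
      funext p
      congr 2
      rw [Complex.polarCoord_symm_apply, circleMap, zero_add, Complex.exp_mul_I]
      push_cast
      ring
    rw [hF] at key
    have hvolG' : volume G' = volume E := by
      rw [hG', L.measurePreserving.measure_preimage hGm.nullMeasurableSet, hvol]
    have hindic : ∫⁻ z, G'.indicator 1 z = volume G' := lintegral_indicator_one hG'm
    -- Tonelli
    have hTon : ∫⁻ p in polarCoord.target,
        ENNReal.ofReal p.1 * G'.indicator 1 (circleMap 0 p.1 p.2)
        = ∫⁻ r in Set.Ioi (0 : ℝ), ∫⁻ θ in Set.Ioo (-π) π,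
            ENNReal.ofReal r * G'.indicator 1 (circleMap 0 r θ) := by
      rw [polarCoord_target, Measure.volume_eq_prod, ← Measure.prod_restrict]
      exact lintegral_prod _ ((ENNReal.measurable_ofReal.comp measurable_fst).mul
        ((measurable_one.indicator hG'm).comp hcm.measurable)).aemeasurable
    have hinner : ∀ r : ℝ, g r ≤ ∫⁻ θ in Set.Ioo (-π) π,
        ENNReal.ofReal r * G'.indicator 1 (circleMap 0 r θ) := by
      intro r
      have h1 : ∀ θ : ℝ, G'.indicator 1 (circleMap 0 r θ)
          = ((fun θ : ℝ => circleMap 0 r θ) ⁻¹' G').indicator (1 : ℝ → ℝ≥0∞) θ := by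
        intro θ
        by_cases hθ : circleMap 0 r θ ∈ G' <;>
          simp [Set.indicator_apply, hθ, Set.mem_preimage]
      have hcmr : Measurable fun θ : ℝ => circleMap 0 r θ :=
        (hcm.comp (Continuous.prodMk_right r)).measurable
      have h2 : ∫⁻ θ in Set.Ioo (-π) π, ENNReal.ofReal r * G'.indicator 1 (circleMap 0 r θ)
          = ENNReal.ofReal r *
            volume ((fun θ : ℝ => circleMap 0 r θ) ⁻¹' G' ∩ Set.Ioo (-π) π) := by
        simp_rw [h1]
        rw [lintegral_const_mul _ (measurable_one.indicator (hcmr hG'm))]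
        congr 1
        rw [lintegral_indicator_one (hcmr hG'm), Measure.restrict_apply (hcmr hG'm)]
      rw [h2, hg]
      refine mul_le_mul_right ?_ _
      have hsub2 : Prod.mk r ⁻¹' S ⊆
          ((fun θ : ℝ => circleMap 0 r θ) ⁻¹' G' ∩ Set.Ioo (-π) π) ∪ {-π, π} := by
        rintro θ ⟨hθI, hθG⟩
        rcases eq_or_lt_of_le hθI.1 with h | h
        · exact Or.inr (Or.inl h.symm)
        rcases eq_or_lt_of_le hθI.2 with h' | h'
        · exact Or.inr (Or.inr h')
        exact Or.inl ⟨hθG, h, h'⟩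
      calc volume (Prod.mk r ⁻¹' S)
          ≤ volume (((fun θ : ℝ => circleMap 0 r θ) ⁻¹' G' ∩ Set.Ioo (-π) π) ∪ {-π, π}) :=
            measure_mono hsub2
        _ ≤ volume ((fun θ : ℝ => circleMap 0 r θ) ⁻¹' G' ∩ Set.Ioo (-π) π)
            + volume ({-π, π} : Set ℝ) := measure_union_le _ _
        _ = volume ((fun θ : ℝ => circleMap 0 r θ) ⁻¹' G' ∩ Set.Ioo (-π) π) := by
            have hz : volume ({-π, π} : Set ℝ) = 0 :=
              (Set.toFinite _).measure_zero _
            rw [hz, add_zero]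
    calc ∫⁻ r in Set.Ioi (0 : ℝ), g r
        ≤ ∫⁻ r in Set.Ioi (0 : ℝ), ∫⁻ θ in Set.Ioo (-π) π,
            ENNReal.ofReal r * G'.indicator 1 (circleMap 0 r θ) :=
          lintegral_mono fun r => hinner r
      _ = volume G' := by rw [← hTon, key, hindic]
      _ = volume E := hvolG'
  exact le_trans (iInf_le_of_le g (iInf_le_of_le hgm (iInf_le _ hb))) hint
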